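/- (Condition (G) implies linear growth, radial convex case.) Assume Λ is nonnegative, its effective domain is strictly star-shaped in the control variable with respect to the origin, Λ is radially convex in the control variable, and let Q be a selection of the convex subdifferential ∂_r Λ(s,y,ru)_{r=1}. If for every M ∈ ℝ there exists R > 0 such that Λ(s,y,u) − Q(s,y,u) ≤ M whenever (s,y,u) ∈ Dom(Λ), u ∈ 𝒰 and |u| ≥ R, then Λ has linear growth from below: there exist α > 0 and d ≥ 0 such that Λ(s,y,u) ≥ α|u| − d for a.e. s ∈ [0,T] and every y ∈ ℝⁿ, u ∈ 𝒰. In fact, if R > 0 is such that Q(s,y,w) − Λ(s,y,w) ≥ 1 whenever (s,y,w) ∈ Dom(Λ), w ∈ 𝒰, |w| ≥ R, one may take α = 1/R and d = 2. -/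

import Mathlib

open MeasureTheory Set Filter
open scoped ENNReal NNReal

noncomputable section

/-- Euclidean space `ℝ^k`. -/
abbrev Vec (k : ℕ) : Type := EuclideanSpace ℝ (Fin k)

/-- The control set is a nonempty cone. -/
def IsCone {k : ℕ} (U : Set (Vec k)) : Prop :=
  U.Nonempty ∧ ∀ u ∈ U, ∀ c : ℝ, 0 < c → c • u ∈ U

variable {n m : ℕ}

/-- The effective domain of the Lagrangian, inside `[0,T] × ℝⁿ × ℝᵐ`. -/
def domSet (T : ℝ) (L : ℝ → Vec n → Vec m → ℝ≥0∞) : Set (ℝ × Vec n × Vec m) :=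
  {p | p.1 ∈ Icc 0 T ∧ L p.1 p.2.1 p.2.2 ≠ ⊤}

/-- Boundary of the effective domain relative to `[0,T] × ℝⁿ × ℝᵐ`. -/
def bdryDom (T : ℝ) (L : ℝ → Vec n → Vec m → ℝ≥0∞) : Set (ℝ × Vec n × Vec m) :=
  closure (domSet T L) ∩
    closure ((Icc (0:ℝ) T ×ˢ (univ : Set (Vec n × Vec m))) \ domSet T L)

/-- Distance to the boundary of the effective domain. -/
def distBdry (T : ℝ) (L : ℝ → Vec n → Vec m → ℝ≥0∞) (p : ℝ × Vec n × Vec m) : ℝ :=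
  Metric.infDist p (bdryDom T L)

/-- The effective domain is strictly star-shaped in the control variable. -/
def StarShapedDom (T : ℝ) (L : ℝ → Vec n → Vec m → ℝ≥0∞) : Prop :=
  ∀ᵐ s ∂(volume : Measure ℝ), s ∈ Icc (0:ℝ) T → ∀ (y : Vec n) (u : Vec m),
    L s y u ≠ ⊤ → ∀ r : ℝ, 0 < r → r ≤ 1 → L s y (r • u) ≠ ⊤

/-- Linear growth from below: `L(s,y,u) ≥ α‖u‖ − d` for `u ∈ U`. -/
def LinearGrowth (T : ℝ) (L : ℝ → Vec n → Vec m → ℝ≥0∞) (U : Set (Vec m))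
    (α d : ℝ) : Prop :=
  ∀ᵐ s ∂(volume : Measure ℝ), s ∈ Icc (0:ℝ) T → ∀ y : Vec n, ∀ u ∈ U,
    ENNReal.ofReal (α * ‖u‖ - d) ≤ L s y u

/-- Condition (S), with explicit constants `κ, A, γ, ε`. -/
def ConditionSWith (T : ℝ) (L : ℝ → Vec n → Vec m → ℝ≥0∞) (U : Set (Vec m))
    (κ A : ℝ) (γ : ℝ → ℝ) (ε : ℝ) : Prop :=
  0 ≤ κ ∧ 0 ≤ A ∧ (∀ s, 0 ≤ γ s) ∧ IntegrableOn γ (Icc 0 T) ∧ 0 < ε ∧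
  ∀ᵐ s ∂(volume : Measure ℝ), s ∈ Icc (0:ℝ) T →
    ∀ s₁ ∈ Icc (s - ε) (s + ε) ∩ Icc (0:ℝ) T, ∀ s₂ ∈ Icc (s - ε) (s + ε) ∩ Icc (0:ℝ) T,
    ∀ y : Vec n, ∀ u ∈ U, L s₁ y u ≠ ⊤ → L s₂ y u ≠ ⊤ →
      ENNReal.ofReal |(L s₂ y u).toReal - (L s₁ y u).toReal| ≤
        (ENNReal.ofReal κ * L s y u + ENNReal.ofReal (A * ‖u‖ + γ s)) *
          ENNReal.ofReal |s₂ - s₁|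

/-- The constant `c_t(B) = (B + d(T−t))/(α(T−t))`. -/
def cLow (T α d B t : ℝ) : ℝ := (B + d * (T - t)) / (α * (T - t))

/-- The constant `Φ(B) = κB + (A/α)(B + dT) + ‖γ‖₁`. -/
def PhiB (T κ A : ℝ) (γ : ℝ → ℝ) (α d B : ℝ) : ℝ :=
  κ * B + A / α * (B + d * T) + ∫ s in Icc (0:ℝ) T, γ s

/-- Radial convexity in the control variable. -/
def RadiallyConvex (T : ℝ) (L : ℝ → Vec n → Vec m → ℝ≥0∞) (U : Set (Vec m)) : Prop :=
  ∀ᵐ s ∂(volume : Measure ℝ), s ∈ Icc (0:ℝ) T → ∀ y : Vec n, ∀ u ∈ U,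
    ∀ r₁ r₂ : ℝ, 0 < r₁ → 0 < r₂ → ∀ a c : ℝ, 0 ≤ a → 0 ≤ c → a + c = 1 →
      L s y ((a * r₁ + c * r₂) • u) ≤
        ENNReal.ofReal a * L s y (r₁ • u) + ENNReal.ofReal c * L s y (r₂ • u)

/-- A selection of the radial convex subdifferential `∂_r L(s,y,ru)` at `r = 1`. -/
def IsRadialSelection (T : ℝ) (L : ℝ → Vec n → Vec m → ℝ≥0∞) (U : Set (Vec m))
    (Q : ℝ → Vec n → Vec m → ℝ) : Prop :=
  ∀ s ∈ Icc (0:ℝ) T, ∀ y : Vec n, ∀ u ∈ U, L s y u ≠ ⊤ → ∀ r : ℝ, 0 < r →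
    ENNReal.ofReal ((L s y u).toReal + Q s y u * (r - 1)) ≤ L s y (r • u)

/-- `L` is bounded on the bounded sets that are well-inside its domain. -/
def BddWellInside (T : ℝ) (L : ℝ → Vec n → Vec m → ℝ≥0∞) : Prop :=
  ∀ C > (0:ℝ), ∀ ρ > (0:ℝ), ∃ M : ℝ,
    ∀ s ∈ Icc (0:ℝ) T, ∀ (y : Vec n) (u : Vec m), L s y u ≠ ⊤ →
      ‖y‖ + ‖u‖ ≤ C → ρ ≤ distBdry T L (s, y, u) → L s y u ≤ ENNReal.ofReal M

/-- Condition (H_B^δ), radial convex form. -/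
def ConditionH (T : ℝ) (L : ℝ → Vec n → Vec m → ℝ≥0∞) (U : Set (Vec m))
    (α d κ A : ℝ) (γ : ℝ → ℝ) (δ B : ℝ) : Prop :=
  ∀ K ≥ (0:ℝ), ∃ ν > (0:ℝ), ∃ c > cLow T α d B δ, ∃ Q : ℝ → Vec n → Vec m → ℝ,
    IsRadialSelection T L U Q ∧
    ∀ ρ > (0:ℝ), ∃ Sup Inf : ℝ,
      (∀ s ∈ Icc (0:ℝ) T, ∀ y : Vec n, ‖y‖ ≤ K → ∀ u ∈ U, ν ≤ ‖u‖ → L s y u ≠ ⊤ →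
        (L s y u).toReal - Q s y u ≤ Sup) ∧
      (∀ s ∈ Icc (0:ℝ) T, ∀ y : Vec n, ‖y‖ ≤ K → ∀ u ∈ U, ‖u‖ < c → L s y u ≠ ⊤ →
        ρ ≤ distBdry T L (s, y, u) → Inf ≤ (L s y u).toReal - Q s y u) ∧
      Sup + 2 * PhiB T κ A γ α d B < Inf

/-- Condition (M_B^δ), radial convex form. -/
def ConditionM (T : ℝ) (L : ℝ → Vec n → Vec m → ℝ≥0∞) (U : Set (Vec m))
    (α d : ℝ) (δ B : ℝ) : Prop :=
  ∀ K ≥ (0:ℝ), ∃ ν > (0:ℝ), ∃ c > cLow T α d B δ, ∃ Q : ℝ → Vec n → Vec m → ℝ,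
    IsRadialSelection T L U Q ∧
    ∀ ρ > (0:ℝ),
      (∃ Inf : ℝ, ∀ s ∈ Icc (0:ℝ) T, ∀ y : Vec n, ‖y‖ ≤ K → ∀ u ∈ U, ‖u‖ < c →
        L s y u ≠ ⊤ → ρ ≤ distBdry T L (s, y, u) → Inf ≤ (L s y u).toReal - Q s y u) ∧
      (∃ Sup : ℝ, ∀ s ∈ Icc (0:ℝ) T, ∀ y : Vec n, ‖y‖ ≤ K → ∀ u ∈ U, ν ≤ ‖u‖ →
        L s y u ≠ ⊤ → (L s y u).toReal - Q s y u ≤ Sup)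

/-- Hypothesis (h₁): the effective domain is a product `[0,T] × D`. -/
def Hyp1 (T : ℝ) (L : ℝ → Vec n → Vec m → ℝ≥0∞) : Prop :=
  ∃ D : Set (Vec n × Vec m), domSet T L = Icc (0:ℝ) T ×ˢ D

/-- Hypothesis (h₂): `L` tends uniformly to `+∞` at the boundary of its domain. -/
def Hyp2 (T : ℝ) (L : ℝ → Vec n → Vec m → ℝ≥0∞) (U : Set (Vec m)) : Prop :=
  ∀ M : ℝ, ∃ ρ > (0:ℝ), ∀ s ∈ Icc (0:ℝ) T, ∀ y : Vec n, ∀ u ∈ U, L s y u ≠ ⊤ →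
    distBdry T L (s, y, u) < ρ → ENNReal.ofReal M ≤ L s y u

/-- The Bolza functional `J_t(y,u)`. -/
def Jfun (T : ℝ) (L : ℝ → Vec n → Vec m → ℝ≥0∞) (g : Vec n → ℝ≥0∞)
    (t : ℝ) (y : ℝ → Vec n) (u : ℝ → Vec m) : ℝ≥0∞ :=
  (∫⁻ s in Icc t T, L s (y s) (u s)) + g (y T)

/-- An admissible pair for problem (P_{t,x}). -/
def Admissible (T : ℝ) (L : ℝ → Vec n → Vec m → ℝ≥0∞) (U : Set (Vec m))
    (b : Vec n → Vec m →L[ℝ] Vec n) (g : Vec n → ℝ≥0∞) (S : Set (Vec n))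
    (t : ℝ) (x : Vec n) (y : ℝ → Vec n) (u : ℝ → Vec m) : Prop :=
  Measurable u ∧ (∀ᵐ s ∂(volume : Measure ℝ), s ∈ Icc t T → u s ∈ U) ∧
  IntegrableOn (fun τ => b (y τ) (u τ)) (Icc t T) ∧
  (∀ s ∈ Icc t T, y s = x + ∫ τ in Icc t s, b (y τ) (u τ)) ∧
  (∀ s ∈ Icc t T, y s ∈ S) ∧
  Jfun T L g t y u ≠ ⊤

/-- The value `inf (P_{t,x})`. -/
def infP (T : ℝ) (L : ℝ → Vec n → Vec m → ℝ≥0∞) (U : Set (Vec m))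
    (b : Vec n → Vec m →L[ℝ] Vec n) (g : Vec n → ℝ≥0∞) (S : Set (Vec n))
    (t : ℝ) (x : Vec n) : ℝ≥0∞ :=
  sInf {v | ∃ y u, Admissible T L U b g S t x y u ∧ Jfun T L g t y u = v}

/-- A minimizing sequence for (P_{t,x}). -/
def MinimizingSeq (T : ℝ) (L : ℝ → Vec n → Vec m → ℝ≥0∞) (U : Set (Vec m))
    (b : Vec n → Vec m →L[ℝ] Vec n) (g : Vec n → ℝ≥0∞) (S : Set (Vec n))
    (t : ℝ) (x : Vec n) (y : ℕ → ℝ → Vec n) (u : ℕ → ℝ → Vec m) : Prop :=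
  (∀ j, Admissible T L U b g S t x (y j) (u j)) ∧
  Tendsto (fun j => Jfun T L g t (y j) (u j)) atTop (nhds (infP T L U b g S t x))

/-- Condition (G) implies linear growth, radial convex case. -/
theorem stmt_2 (T : ℝ) (hT : 0 < T) (n m : ℕ)
    (L : ℝ → Vec n → Vec m → ℝ≥0∞)
    (hmeas : Measurable fun p : ℝ × Vec n × Vec m => L p.1 p.2.1 p.2.2)
    (U : Set (Vec m)) (hU : IsCone U)
    (hstar : StarShapedDom T L)
    (hconv : RadiallyConvex T L U)
    (Q : ℝ → Vec n → Vec m → ℝ) (hQ : IsRadialSelection T L U Q)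
    (hG : ∀ M : ℝ, ∃ R > (0:ℝ), ∀ s ∈ Icc (0:ℝ) T, ∀ (y : Vec n), ∀ u ∈ U,
      L s y u ≠ ⊤ → R ≤ ‖u‖ → (L s y u).toReal - Q s y u ≤ M) :
    (∃ α > (0:ℝ), ∃ d : ℝ, 0 ≤ d ∧ LinearGrowth T L U α d) ∧
    ∀ R > (0:ℝ),
      (∀ s ∈ Icc (0:ℝ) T, ∀ (y : Vec n), ∀ w ∈ U, L s y w ≠ ⊤ → R ≤ ‖w‖ →
        1 ≤ Q s y w - (L s y w).toReal) →
      LinearGrowth T L U (1 / R) 2 := by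
  have key : ∀ R > (0:ℝ),
      (∀ s ∈ Icc (0:ℝ) T, ∀ (y : Vec n), ∀ w ∈ U, L s y w ≠ ⊤ → R ≤ ‖w‖ →
        1 ≤ Q s y w - (L s y w).toReal) →
      LinearGrowth T L U (1 / R) 2 := by
    intro R hR hyp
    filter_upwards [hstar] with s hst hs y u hu
    by_cases htop : L s y u = ⊤
    · simp [htop]
    by_cases hsmall : ‖u‖ ≤ 2 * R
    · have hle0 : 1 / R * ‖u‖ - 2 ≤ 0 := by
        have h1 : 1 / R * ‖u‖ ≤ 1 / R * (2 * R) := by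
          apply mul_le_mul_of_nonneg_left hsmall
          positivity
        have h2 : 1 / R * (2 * R) = 2 := by field_simp
        linarith
      rw [ENNReal.ofReal_eq_zero.mpr hle0]
      exact zero_le
    push_neg at hsmall
    have hu0 : (0:ℝ) < ‖u‖ := lt_trans (by positivity) hsmall
    set r : ℝ := R / ‖u‖ with hr
    have hr0 : 0 < r := by positivity
    have hr1 : r ≤ 1 := by
      rw [hr, div_le_one hu0]; linarith
    set w := r • u with hw
    have hwU : w ∈ U := hU.2 u hu r hr0
    have hwtop : L s y w ≠ ⊤ := hst hs y u htop r hr0 hr1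
    have hnormw : ‖w‖ = R := by
      rw [hw, norm_smul, Real.norm_eq_abs, abs_of_pos hr0, hr]
      field_simp
    have hQw : 1 ≤ Q s y w - (L s y w).toReal :=
      hyp s hs y w hwU hwtop (le_of_eq hnormw.symm)
    set ρ := ‖u‖ / R with hρ
    have hρ1 : 1 ≤ ρ := by
      rw [hρ, le_div_iff₀ hR]; linarith
    have hsel := hQ s hs y w hwU hwtop ρ (by positivity)
    have hcomp : (ρ • w) = u := by
      rw [hw, smul_smul, hρ, hr]
      have hone : ‖u‖ / R * (R / ‖u‖) = 1 := by field_simp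
      rw [hone, one_smul]
    rw [hcomp] at hsel
    have hle : (L s y w).toReal + Q s y w * (ρ - 1) ≤ (L s y u).toReal :=
      (ENNReal.ofReal_le_iff_le_toReal htop).mp hsel
    have hLw : 0 ≤ (L s y w).toReal := ENNReal.toReal_nonneg
    have hfin : 1 / R * ‖u‖ - 2 ≤ (L s y u).toReal := by
      have h1 : ρ - 1 ≤ Q s y w * (ρ - 1) := by nlinarith
      have h2 : 1 / R * ‖u‖ = ρ := by rw [hρ]; ring
      nlinarith
    calc ENNReal.ofReal (1 / R * ‖u‖ - 2)
        ≤ ENNReal.ofReal (L s y u).toReal := ENNReal.ofReal_le_ofReal hfin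
      _ = L s y u := ENNReal.ofReal_toReal htop
  constructor
  · obtain ⟨R, hR, hRprop⟩ := hG (-1)
    refine ⟨1 / R, by positivity, 2, by norm_num, key R hR ?_⟩
    intro s hs y w hw hwtop hnw
    have := hRprop s hs y w hw hwtop hnw
    linarith
  · exact key
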